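/- In the bipartite SEM of the previous statement with correlation matrix Σ̃_{ij} = Σ_{ij}/√(Σ_{ii}Σ_{jj}), the mutual incoherence parameter μ := max_{j≠k} |Σ̃_{jk}| equals sβ_max²/(1 + sβ_max²), which tends to 1 as sβ_max² → ∞ and hence violates the condition μ ≤ 1/(2s-1) for all s ≥ 2 when β_max ≥ 1. -/

import Mathlib

open Filter

lemma aux_tendsto12 : Tendsto (fun x : ℝ => x / (1 + x)) atTop (nhds 1) := by
  have he : ∀ᶠ x : ℝ in atTop, (1:ℝ) - (1 + x)⁻¹ = x / (1 + x) := by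
    filter_upwards [eventually_gt_atTop 0] with x hx
    have h1 : (1:ℝ) + x ≠ 0 := by linarith
    field_simp
    ring
  have h2 : Tendsto (fun x : ℝ => 1 - (1 + x)⁻¹) atTop (nhds 1) := by
    have := tendsto_inv_atTop_zero.comp
      (tendsto_atTop_add_const_left (atTop : Filter ℝ) (1:ℝ) tendsto_id)
    simpa using tendsto_const_nhds.sub this
  exact h2.congr' he

/-- For the bipartite-SEM covariance matrix
(`Σ_{S*S*} = I_s`, `Σ_{jk} = β_max` for support–nonsupport pairs,
`Σ_{kk} = 1 + sβ_max²` and `Σ_{kk'} = sβ_max²` for nonsupport pairs) with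
correlation matrix `Σ̃_{ij} = Σ_{ij}/√(Σ_{ii}Σ_{jj})`, the mutual incoherence
`μ = max_{i≠j} |Σ̃_{ij}|` equals `sβ_max²/(1+sβ_max²)`; this violates the OMP
condition `μ ≤ 1/(2s-1)` for `s ≥ 2, β_max ≥ 1`, and `x/(1+x) → 1` as
`x = sβ_max² → ∞`. -/
theorem stmt_12 (s m : ℕ) (hs : 2 ≤ s) (hm : 2 ≤ m) (βmax : ℝ) (hβ : 1 ≤ βmax) :
    let Sig : Fin s ⊕ Fin m → Fin s ⊕ Fin m → ℝ := fun a b =>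
      match a, b with
      | Sum.inl j, Sum.inl j' => if j = j' then 1 else 0
      | Sum.inl _, Sum.inr _ => βmax
      | Sum.inr _, Sum.inl _ => βmax
      | Sum.inr k, Sum.inr k' => (if k = k' then 1 else 0) + s * βmax ^ 2
    let corr : Fin s ⊕ Fin m → Fin s ⊕ Fin m → ℝ := fun a b =>
      Sig a b / Real.sqrt (Sig a a * Sig b b)
    IsGreatest {x : ℝ | ∃ i j : Fin s ⊕ Fin m, i ≠ j ∧ x = |corr i j|}
        ((s * βmax ^ 2) / (1 + s * βmax ^ 2)) ∧
      1 / (2 * (s : ℝ) - 1) < (s * βmax ^ 2) / (1 + s * βmax ^ 2) ∧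
      Tendsto (fun x : ℝ => x / (1 + x)) atTop (nhds 1) := by
  intro Sig corr
  have hs' : (2:ℝ) ≤ (s:ℝ) := by exact_mod_cast hs
  have hβ0 : (0:ℝ) < βmax := lt_of_lt_of_le one_pos hβ
  have hβ2 : (1:ℝ) ≤ βmax ^ 2 := by nlinarith
  set c : ℝ := 1 + (s:ℝ) * βmax ^ 2 with hc_def
  have hc : 0 < c := by positivity
  have hnum : (0:ℝ) < (s:ℝ) * βmax ^ 2 := by positivity
  have hsqc : Real.sqrt (c * c) = c := Real.sqrt_mul_self hc.le
  have hr := Real.sqrt_nonneg c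
  have hrpos : 0 < Real.sqrt c := Real.sqrt_pos.2 hc
  have hrr : Real.sqrt c * Real.sqrt c = c := Real.mul_self_sqrt hc.le
  have hsc : Real.sqrt c ≤ (s:ℝ) * βmax := by
    rw [show (s:ℝ) * βmax = Real.sqrt (((s:ℝ) * βmax) ^ 2) from
      (Real.sqrt_sq (by positivity)).symm]
    apply Real.sqrt_le_sqrt
    nlinarith
  refine ⟨⟨⟨Sum.inr ⟨0, by omega⟩, Sum.inr ⟨1, by omega⟩, by simp, ?_⟩, ?_⟩, ?_, ?_⟩
  · simp only [corr, Sig]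
    norm_num [← hc_def, hsqc, abs_of_nonneg (div_nonneg hnum.le hc.le)]
  · rintro x ⟨i, j, hij, rfl⟩
    rcases i with j1 | k1 <;> rcases j with j2 | k2
    · have : j1 ≠ j2 := fun h => hij (by rw [h])
      simp only [corr, Sig, if_neg this]
      simpa using div_nonneg hnum.le hc.le
    · simp only [corr, Sig, if_pos rfl, if_true, one_mul]
      rw [abs_of_nonneg (by positivity), div_le_div_iff₀ hrpos hc]
      nlinarith [mul_nonneg (mul_nonneg (sub_nonneg.2 hsc) hβ0.le) hrpos.le]
    · simp only [corr, Sig, if_pos rfl, if_true, mul_one]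
      rw [abs_of_nonneg (by positivity), div_le_div_iff₀ hrpos hc]
      nlinarith [mul_nonneg (mul_nonneg (sub_nonneg.2 hsc) hβ0.le) hrpos.le]
    · have hne : k1 ≠ k2 := fun h => hij (by rw [h])
      simp only [corr, Sig, if_neg hne, if_pos rfl, if_true, zero_add, hsqc]
      rw [← hc_def, hsqc, abs_of_nonneg (div_nonneg hnum.le hc.le)]
  · rw [div_lt_div_iff₀ (by linarith) hc]
    nlinarith
  · exact aux_tendsto12
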